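/- Let D_S ≥ 1 and D_T ≥ D_S with k = ⌊D_T/D_S⌋. For every x ∈ ℝ^{D_S}, the (population) variance of the average-expanded vector satisfies Var[V_avg(x)] = η²·Var[x], where η² = k·D_S/D_T; here Var[y] of a vector y ∈ ℝ^D denotes (1/D)·∑_i (y[i] − E[y])² with E[y] = (1/D)·∑_i y[i]. -/

import Mathlib

/-- Index bound for the tail part of an expansion from dimension `DS` to `DT`. -/
theorem sub_lt_mod (DS DT i : ℕ) (hDS : 0 < DS) (hi : i < DT) (h2 : DT / DS * DS ≤ i) :
    i - DT / DS * DS < DT % DS := by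
  have h := Nat.div_add_mod' DT DS
  set m := DT / DS * DS
  omega

/-- Average expansion `V_avg` from `ℝ^{DS}` to `ℝ^{DT}`. -/
noncomputable def vAvg (DS DT : ℕ) (hDS : 0 < DS) (x : Fin DS → ℝ) : Fin DT → ℝ :=
  fun i => if i.val < DT / DS * DS then x ⟨i.val % DS, Nat.mod_lt _ hDS⟩
           else (∑ j, x j) / (DS : ℝ)

/-- Zero expansion `V_zero` from `ℝ^{DS}` to `ℝ^{DT}`. -/
def vZero (DS DT : ℕ) (hDS : 0 < DS) (x : Fin DS → ℝ) : Fin DT → ℝ :=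
  fun i => if i.val < DT / DS * DS then x ⟨i.val % DS, Nat.mod_lt _ hDS⟩ else 0

/-- Circular expansion `V_circ` from `ℝ^{DS}` to `ℝ^{DT}`. -/
def vCirc (DS DT : ℕ) (hDS : 0 < DS) (x : Fin DS → ℝ) : Fin DT → ℝ :=
  fun i => x ⟨i.val % DS, Nat.mod_lt _ hDS⟩

/-- Mean of a vector. -/
noncomputable def meanV {D : ℕ} (x : Fin D → ℝ) : ℝ := (∑ i, x i) / (D : ℝ)

/-- Population variance of a vector. -/
noncomputable def varV {D : ℕ} (x : Fin D → ℝ) : ℝ := (∑ i, (x i - meanV x) ^ 2) / (D : ℝ)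

lemma sum_mod_aux (n k : ℕ) (f : ℕ → ℝ) :
    ∑ i ∈ Finset.range (k * n), f (i % n) = k * ∑ j ∈ Finset.range n, f j := by
  induction k with
  | zero => simp
  | succ k ih =>
    rw [Nat.succ_mul, Finset.sum_range_add, ih]
    have : ∀ i ∈ Finset.range n, f ((k * n + i) % n) = f i := by
      intro i hi
      rw [Finset.mem_range] at hi
      rw [add_comm, Nat.add_mul_mod_self_right, Nat.mod_eq_of_lt hi]
    rw [Finset.sum_congr rfl this]
    push_cast
    ring

lemma sum_vAvg (DS DT : ℕ) (hDS : 0 < DS) (x : Fin DS → ℝ) (F : ℝ → ℝ) :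
    ∑ i, F (vAvg DS DT hDS x i)
      = ((DT / DS : ℕ) : ℝ) * ∑ j, F (x j)
        + ((DT - DT / DS * DS : ℕ) : ℝ) * F ((∑ j, x j) / (DS : ℝ)) := by
  have hmle : DT / DS * DS ≤ DT := Nat.div_mul_le_self DT DS
  set C : ℝ := F ((∑ j, x j) / (DS : ℝ)) with hC
  set f : ℕ → ℝ := fun j => F (x ⟨j % DS, Nat.mod_lt _ hDS⟩) with hf
  have h1 : ∑ i, F (vAvg DS DT hDS x i)
      = ∑ i ∈ Finset.range DT, (if i < DT / DS * DS then f i else C) := by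
    rw [← Fin.sum_univ_eq_sum_range (fun i => if i < DT / DS * DS then f i else C) DT]
    refine Finset.sum_congr rfl fun i _ => ?_
    simp only [vAvg, f, hC, apply_ite F]
  rw [h1, Finset.range_eq_Ico,
    ← Finset.sum_Ico_consecutive _ (Nat.zero_le (DT / DS * DS)) hmle,
    ← Finset.range_eq_Ico]
  have h2 : ∑ i ∈ Finset.range (DT / DS * DS), (if i < DT / DS * DS then f i else C)
      = ∑ i ∈ Finset.range (DT / DS * DS), f i := by
    refine Finset.sum_congr rfl fun i hi => ?_
    rw [Finset.mem_range] at hi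
    simp [hi]
  have h3 : ∑ i ∈ Finset.Ico (DT / DS * DS) DT, (if i < DT / DS * DS then f i else C)
      = ((DT - DT / DS * DS : ℕ) : ℝ) * C := by
    rw [Finset.sum_congr rfl fun i hi => if_neg (by
      rw [Finset.mem_Ico] at hi; omega)]
    rw [Finset.sum_const, Nat.card_Ico, nsmul_eq_mul]
  have hff : ∀ i, f (i % DS) = f i := by
    intro i
    simp only [f]
    congr 1
    exact congrArg x (Fin.ext (Nat.mod_mod_of_dvd i dvd_rfl))
  have h4 : ∑ i ∈ Finset.range (DT / DS * DS), f i
      = ((DT / DS : ℕ) : ℝ) * ∑ j, F (x j) := by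
    rw [Finset.sum_congr rfl fun i _ => (hff i).symm, sum_mod_aux]
    congr 1
    rw [← Fin.sum_univ_eq_sum_range f DS]
    refine Finset.sum_congr rfl fun j _ => ?_
    simp only [f]
    congr 1
    exact congrArg x (Fin.ext (Nat.mod_eq_of_lt j.isLt))
  rw [h2, h3, h4]

theorem stmt_2 (DS DT : ℕ) (hDS : 0 < DS) (hDT : DS ≤ DT) (x : Fin DS → ℝ) :
    varV (vAvg DS DT hDS x)
      = ((DT / DS * DS : ℕ) : ℝ) / (DT : ℝ) * varV x := by
  have hDT0 : 0 < DT := lt_of_lt_of_le hDS hDT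
  have hmle : DT / DS * DS ≤ DT := Nat.div_mul_le_self DT DS
  have hDSR : (DS : ℝ) ≠ 0 := Nat.cast_ne_zero.mpr hDS.ne'
  have hDTR : (DT : ℝ) ≠ 0 := Nat.cast_ne_zero.mpr hDT0.ne'
  have hcast : ((DT / DS : ℕ) : ℝ) * (DS : ℝ) = ((DT / DS * DS : ℕ) : ℝ) := by
    push_cast; ring
  have hcast2 : ((DT - DT / DS * DS : ℕ) : ℝ) = (DT : ℝ) - ((DT / DS * DS : ℕ) : ℝ) := by
    push_cast [hmle]; ring
  set M := meanV x with hM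
  have hSM : (∑ j, x j) / (DS : ℝ) = M := by rw [hM, meanV]
  have hsum : ∑ i, vAvg DS DT hDS x i
      = ((DT / DS : ℕ) : ℝ) * ∑ j, x j
        + ((DT - DT / DS * DS : ℕ) : ℝ) * ((∑ j, x j) / (DS : ℝ)) := by
    simpa using sum_vAvg DS DT hDS x id
  have hmean : meanV (vAvg DS DT hDS x) = M := by
    rw [meanV, hsum, hSM, hM, meanV, hcast2]
    field_simp
    linear_combination (∑ j, x j) * hcast
  have hsum2 : ∑ i, (vAvg DS DT hDS x i - M) ^ 2
      = ((DT / DS : ℕ) : ℝ) * ∑ j, (x j - M) ^ 2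
        + ((DT - DT / DS * DS : ℕ) : ℝ) * (((∑ j, x j) / (DS : ℝ)) - M) ^ 2 :=
    sum_vAvg DS DT hDS x (fun y => (y - M) ^ 2)
  rw [varV, hmean, hsum2, hSM, sub_self, varV, ← hM]
  field_simp
  linear_combination (∑ j, (x j - M)^2) * hcast
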